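/- Let α > 2 and c_w > 0, N ∈ ℕ, and let W' = (w'_{j'k'})_{-N≤j',k'≤N} satisfy |w'_{j'k'}| ≤ c_w/(⟨j'⟩⟨k'⟩(N+1)²⟨j'-k'⟩^{α-1}). Let Û ∈ U(2N+1). Then every entry S_{jk} of Û* W' Û satisfies |S_{jk}| ≤ c_w c₂ / (N+1)², where c₂ = c_ν|_{ν=2} is the constant from the convolution lemma. -/

import Mathlib

/-- ⟨k⟩ = |k| + 1 -/
noncomputable def br (k : ℤ) : ℝ := |(k : ℝ)| + 1

theorem conjugated_block_bound (α cw c₂ : ℝ) (hα : 2 < α) (hcw : 0 < cw) (N : ℕ)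
    (W' : Matrix (Finset.Icc (-(N : ℤ)) (N : ℤ)) (Finset.Icc (-(N : ℤ)) (N : ℤ)) ℂ)
    (hW' : ∀ j' k' : Finset.Icc (-(N : ℤ)) (N : ℤ),
      ‖W' j' k'‖ ≤ cw /
        (br j'.val * br k'.val * ((N : ℝ) + 1) ^ 2 * br (j'.val - k'.val) ^ (α - 1)))
    (hc₂a : ∀ j' : ℤ, ∑ k' : Finset.Icc (-(N : ℤ)) (N : ℤ),
        1 / (br k'.val ^ 2 * br (j' - k'.val) ^ (2 * α - 2)) ≤ c₂ / br j' ^ 2)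
    (hc₂b : ∑ j' : Finset.Icc (-(N : ℤ)) (N : ℤ), 1 / br j'.val ^ 2 ≤ c₂)
    (Uh : Matrix (Finset.Icc (-(N : ℤ)) (N : ℤ)) (Finset.Icc (-(N : ℤ)) (N : ℤ)) ℂ)
    (hUh : Uh ∈ Matrix.unitaryGroup (Finset.Icc (-(N : ℤ)) (N : ℤ)) ℂ) :
    ∀ j k : Finset.Icc (-(N : ℤ)) (N : ℤ),
      ‖(Uh.conjTranspose * W' * Uh) j k‖ ≤ cw * c₂ / ((N : ℝ) + 1) ^ 2 := by
  intro j k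
  have hbr1 : ∀ x : ℤ, (1:ℝ) ≤ br x := fun x => le_add_of_nonneg_left (abs_nonneg _)
  have hbrpos : ∀ x : ℤ, (0:ℝ) < br x := fun x => lt_of_lt_of_le one_pos (hbr1 x)
  have hNpos : (0:ℝ) < ((N : ℝ) + 1) ^ 2 := by positivity
  have hc₂0 : 0 ≤ c₂ := le_trans (Finset.sum_nonneg (fun i _ => by positivity)) hc₂b
  -- column sums of squared norms of Uh equal 1
  have hcol : ∀ c : Finset.Icc (-(N : ℤ)) (N : ℤ), ∑ r : Finset.Icc (-(N : ℤ)) (N : ℤ),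
      ‖Uh r c‖ ^ 2 = 1 := by
    intro c
    have h1 : star Uh * Uh = 1 := hUh.1
    have h2 : (star Uh * Uh) c c = (1 : Matrix _ _ ℂ) c c := by rw [h1]
    rw [Matrix.mul_apply, Matrix.one_apply_eq] at h2
    have h3 : ∀ r, (star Uh) c r * Uh r c = ((‖Uh r c‖ ^ 2 : ℝ) : ℂ) := by
      intro r
      rw [Matrix.star_apply]
      rw [show ((‖Uh r c‖ ^ 2 : ℝ) : ℂ) = (Complex.normSq (Uh r c) : ℂ) by
        rw [← Complex.sq_norm]]
      exact (Complex.normSq_eq_conj_mul_self).symm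
    rw [Finset.sum_congr rfl (fun r _ => h3 r), ← Complex.ofReal_sum] at h2
    exact_mod_cast h2
  have hXsq : ∀ m : ℤ, (br m ^ (α - 1)) ^ 2 = br m ^ (2 * α - 2) := by
    intro m
    rw [sq, ← Real.rpow_add (hbrpos m)]
    ring_nf
  have hrpow_pos : ∀ m : ℤ, (0:ℝ) < br m ^ (α - 1) := fun m => Real.rpow_pos_of_pos (hbrpos m) _
  -- inner sums
  set B : (Finset.Icc (-(N : ℤ)) (N : ℤ)) → ℝ := fun j' =>
    ∑ k' : Finset.Icc (-(N : ℤ)) (N : ℤ),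
      ‖Uh k' k‖ * (1 / (br k'.val * br (j'.val - k'.val) ^ (α - 1))) with hB
  have hBnonneg : ∀ j', 0 ≤ B j' := by
    intro j'
    apply Finset.sum_nonneg
    intro i _
    have h1 := hrpow_pos (j'.val - i.val)
    have h2 := hbrpos i.val
    positivity
  have hBle : ∀ j', B j' ≤ Real.sqrt c₂ / br j'.val := by
    intro j'
    have hcs := Finset.sum_mul_sq_le_sq_mul_sq Finset.univ
      (fun k' : Finset.Icc (-(N : ℤ)) (N : ℤ) => ‖Uh k' k‖)
      (fun k' => 1 / (br k'.val * br (j'.val - k'.val) ^ (α - 1)))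
    have hsq : B j' ^ 2 ≤ c₂ / br j'.val ^ 2 := by
      calc B j' ^ 2 ≤ (∑ k' : Finset.Icc (-(N : ℤ)) (N : ℤ), ‖Uh k' k‖ ^ 2) *
            ∑ k' : Finset.Icc (-(N : ℤ)) (N : ℤ),
              (1 / (br k'.val * br (j'.val - k'.val) ^ (α - 1))) ^ 2 := hcs
        _ = ∑ k' : Finset.Icc (-(N : ℤ)) (N : ℤ),
              1 / (br k'.val ^ 2 * br (j'.val - k'.val) ^ (2 * α - 2)) := by
            rw [hcol k, one_mul]
            exact Finset.sum_congr rfl (fun k' _ => by rw [div_pow, one_pow, mul_pow, hXsq])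
        _ ≤ c₂ / br j'.val ^ 2 := hc₂a j'.val
    calc B j' = Real.sqrt (B j' ^ 2) := (Real.sqrt_sq (hBnonneg j')).symm
      _ ≤ Real.sqrt (c₂ / br j'.val ^ 2) := Real.sqrt_le_sqrt hsq
      _ = Real.sqrt c₂ / br j'.val := by
          rw [Real.sqrt_div hc₂0, Real.sqrt_sq (hbrpos j'.val).le]
  -- outer Cauchy-Schwarz
  set D : ℝ := ∑ j' : Finset.Icc (-(N : ℤ)) (N : ℤ), ‖Uh j' j‖ * (1 / br j'.val ^ 2) with hD
  have hDnonneg : 0 ≤ D := Finset.sum_nonneg fun i _ => by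
    have := hbrpos i.val; positivity
  have hDle : D ≤ Real.sqrt c₂ := by
    have hcs := Finset.sum_mul_sq_le_sq_mul_sq Finset.univ
      (fun j' : Finset.Icc (-(N : ℤ)) (N : ℤ) => ‖Uh j' j‖)
      (fun j' => 1 / br j'.val ^ 2)
    have hsq : D ^ 2 ≤ c₂ := by
      calc D ^ 2 ≤ (∑ j' : Finset.Icc (-(N : ℤ)) (N : ℤ), ‖Uh j' j‖ ^ 2) *
            ∑ j' : Finset.Icc (-(N : ℤ)) (N : ℤ), (1 / br j'.val ^ 2) ^ 2 := hcs
        _ = ∑ j' : Finset.Icc (-(N : ℤ)) (N : ℤ), (1 / br j'.val ^ 2) ^ 2 := by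
            rw [hcol j, one_mul]
        _ ≤ ∑ j' : Finset.Icc (-(N : ℤ)) (N : ℤ), 1 / br j'.val ^ 2 := by
            refine Finset.sum_le_sum fun i _ => ?_
            have h1 : (0:ℝ) ≤ 1 / br i.val ^ 2 := by
              have := hbrpos i.val; positivity
            have h2 : 1 / br i.val ^ 2 ≤ 1 := by
              rw [div_le_one (by have := hbrpos i.val; positivity)]
              nlinarith [hbr1 i.val]
            calc (1 / br i.val ^ 2) ^ 2 = (1 / br i.val ^ 2) * (1 / br i.val ^ 2) := sq _
              _ ≤ 1 * (1 / br i.val ^ 2) := by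
                  exact mul_le_mul_of_nonneg_right h2 h1
              _ = 1 / br i.val ^ 2 := one_mul _
        _ ≤ c₂ := hc₂b
    calc D = Real.sqrt (D ^ 2) := (Real.sqrt_sq hDnonneg).symm
      _ ≤ Real.sqrt c₂ := Real.sqrt_le_sqrt hsq
  -- entry formula
  have hrw : (Uh.conjTranspose * W' * Uh) j k
      = ∑ k' : Finset.Icc (-(N : ℤ)) (N : ℤ), ∑ j' : Finset.Icc (-(N : ℤ)) (N : ℤ),
          star (Uh j' j) * W' j' k' * Uh k' k := by
    rw [Matrix.mul_apply]
    refine Finset.sum_congr rfl fun k' _ => ?_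
    rw [Matrix.mul_apply, Finset.sum_mul]
    refine Finset.sum_congr rfl fun j' _ => ?_
    rw [Matrix.conjTranspose_apply]
  calc ‖(Uh.conjTranspose * W' * Uh) j k‖
      ≤ ∑ k' : Finset.Icc (-(N : ℤ)) (N : ℤ), ∑ j' : Finset.Icc (-(N : ℤ)) (N : ℤ),
          ‖Uh j' j‖ * ‖W' j' k'‖ * ‖Uh k' k‖ := by
        rw [hrw]
        refine (norm_sum_le _ _).trans (Finset.sum_le_sum fun k' _ => ?_)
        refine (norm_sum_le _ _).trans (Finset.sum_le_sum fun j' _ => ?_)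
        rw [norm_mul, norm_mul, norm_star]
    _ ≤ ∑ k' : Finset.Icc (-(N : ℤ)) (N : ℤ), ∑ j' : Finset.Icc (-(N : ℤ)) (N : ℤ),
          (cw / ((N : ℝ) + 1) ^ 2) * ((‖Uh j' j‖ * (1 / br j'.val)) *
            (‖Uh k' k‖ * (1 / (br k'.val * br (j'.val - k'.val) ^ (α - 1))))) := by
        refine Finset.sum_le_sum fun k' _ => Finset.sum_le_sum fun j' _ => ?_
        have hbnd := hW' j' k'
        have heq : (cw / ((N : ℝ) + 1) ^ 2) * ((‖Uh j' j‖ * (1 / br j'.val)) *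
              (‖Uh k' k‖ * (1 / (br k'.val * br (j'.val - k'.val) ^ (α - 1)))))
            = ‖Uh j' j‖ * (cw / (br j'.val * br k'.val * ((N : ℝ) + 1) ^ 2 *
                br (j'.val - k'.val) ^ (α - 1))) * ‖Uh k' k‖ := by
          have h1 := (hbrpos j'.val).ne'
          have h2 := (hbrpos k'.val).ne'
          have h3 := (hrpow_pos (j'.val - k'.val)).ne'
          have h4 := hNpos.ne'
          field_simp
        rw [heq]
        have hU1 : (0:ℝ) ≤ ‖Uh j' j‖ := norm_nonneg _
        have hU2 : (0:ℝ) ≤ ‖Uh k' k‖ := norm_nonneg _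
        exact mul_le_mul_of_nonneg_right (mul_le_mul_of_nonneg_left hbnd hU1) hU2
    _ = (cw / ((N : ℝ) + 1) ^ 2) * ∑ j' : Finset.Icc (-(N : ℤ)) (N : ℤ),
          (‖Uh j' j‖ * (1 / br j'.val)) * B j' := by
        simp only [hB, Finset.mul_sum]
        rw [Finset.sum_comm]
    _ ≤ (cw / ((N : ℝ) + 1) ^ 2) * ∑ j' : Finset.Icc (-(N : ℤ)) (N : ℤ),
          (‖Uh j' j‖ * (1 / br j'.val)) * (Real.sqrt c₂ / br j'.val) := by
        refine mul_le_mul_of_nonneg_left (Finset.sum_le_sum fun j' _ => ?_) (by positivity)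
        refine mul_le_mul_of_nonneg_left (hBle j') ?_
        have := hbrpos j'.val
        positivity
    _ = (cw / ((N : ℝ) + 1) ^ 2) * (Real.sqrt c₂ * D) := by
        rw [hD]
        simp only [Finset.mul_sum]
        refine Finset.sum_congr rfl fun j' _ => ?_
        have h1 := (hbrpos j'.val).ne'
        field_simp
    _ ≤ (cw / ((N : ℝ) + 1) ^ 2) * (Real.sqrt c₂ * Real.sqrt c₂) := by
        refine mul_le_mul_of_nonneg_left (mul_le_mul_of_nonneg_left hDle (Real.sqrt_nonneg _))
          (by positivity)
    _ = cw * c₂ / ((N : ℝ) + 1) ^ 2 := by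
        rw [Real.mul_self_sqrt hc₂0]
        ring
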